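/- Let (X,d,μ) be a metric measure space and p ∈ [1,∞). Suppose μ satisfies a locally uniform comparability condition. Then for every f ∈ L^p_loc(X,μ) and every x ∈ X there exist constants r₀ > 0, C > 0 and a neighborhood V of x such that for every r ∈ (0,r₀): ∫_V |A_r f|^p dμ ≤ C ∫_V |f|^p dμ < ∞, where A_r f(y) := ⨍_{B_r(y)} f dμ. -/

import Mathlib

open MeasureTheory Filter Metric Set
open scoped ENNReal Topology

lemma measurable_ball_measure {X : Type*} [MetricSpace X] [MeasurableSpace X]
    [OpensMeasurableSpace X] (μ : Measure X) (r : ℝ) :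
    Measurable fun y : X => μ (ball y r) := by
  have hlsc : LowerSemicontinuous fun y : X => μ (ball y r) := by
    intro y c hc
    have hr : (0:ℝ) < r := by
      by_contra h
      push_neg at h
      simp [ball_eq_empty.2 h] at hc
    have hunion : ball y r = ⋃ n : ℕ, closedBall y (r - 1/(n+1)) := by
      ext z
      simp only [mem_ball, mem_iUnion, mem_closedBall]
      constructor
      · intro hz
        obtain ⟨n, hn⟩ := exists_nat_one_div_lt (show (0:ℝ) < r - dist z y by linarith)
        exact ⟨n, by push_cast at hn ⊢; linarith⟩
      · rintro ⟨n, hn⟩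
        have h1 : (0:ℝ) < 1/(n+1) := by positivity
        linarith
    have hmono : Monotone fun n : ℕ => closedBall y (r - 1/(n+1)) := by
      intro n m hnm
      apply closedBall_subset_closedBall
      have : (1:ℝ)/(m+1) ≤ 1/(n+1) := by
        apply one_div_le_one_div_of_le (by positivity)
        have : (n:ℝ) ≤ m := Nat.cast_le.2 hnm
        push_cast; linarith
      linarith
    simp only at hc
    rw [hunion, hmono.measure_iUnion, gt_iff_lt, lt_iSup_iff] at hc
    obtain ⟨n, hn⟩ := hc
    have h1 : (0:ℝ) < 1/(n+1) := by positivity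
    filter_upwards [ball_mem_nhds y h1] with y' hy'
    refine hn.trans_le (measure_mono fun z hz => ?_)
    rw [mem_ball]
    calc dist z y' ≤ dist z y + dist y y' := dist_triangle _ _ _
      _ < (r - 1/(n+1)) + 1/(n+1) := by
          have := mem_closedBall.1 hz
          have := mem_ball.1 hy'
          rw [dist_comm y' y] at this
          linarith
      _ = r := by ring
  exact hlsc.measurable

lemma second_countable_of_mm {X : Type*} [MetricSpace X] [MeasurableSpace X]
    [OpensMeasurableSpace X] (μ : Measure X)
    (hμ : ∀ (x : X) (r : ℝ), 0 < r → 0 < μ (ball x r) ∧ μ (ball x r) < ∞) :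
    SecondCountableTopology X := by
  cases isEmpty_or_nonempty X with
  | inl h => infer_instance
  | inr h =>
    obtain ⟨x₀⟩ := h
    apply Metric.secondCountable_of_almost_dense_set
    intro ε hε
    have key : ∀ n : ℕ, ∃ D : Set X, D.Countable ∧
        ∀ y ∈ ball x₀ (n+1), ∃ w ∈ D, dist y w ≤ ε := by
      intro n
      set S : Set (Set X) :=
        {A | A ⊆ ball x₀ (n+1) ∧ ∀ a ∈ A, ∀ b ∈ A, a ≠ b → ε ≤ dist a b} with hS
      obtain ⟨M, hM⟩ : ∃ M, Maximal (· ∈ S) M := by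
        apply zorn_subset
        intro c hc hchain
        refine ⟨⋃₀ c, ⟨?_, ?_⟩, fun s hs => subset_sUnion_of_mem hs⟩
        · exact sUnion_subset fun A hA => (hc hA).1
        · rintro a ⟨A, hA, haA⟩ b ⟨B, hB, hbB⟩ hab
          rcases hchain.total hA hB with hAB | hBA
          · exact (hc hB).2 a (hAB haA) b hbB hab
          · exact (hc hA).2 a haA b (hBA hbB) hab
      have hMc : M.Countable := by
        have hdisj : Pairwise (Function.onFun Disjoint fun a : M => ball (a : X) (ε/2)) := by
          intro a b hab
          rw [Function.onFun]
          apply ball_disjoint_ball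
          have hab' : (a : X) ≠ (b : X) := Subtype.val_injective.ne hab
          have := hM.1.2 (a : X) a.2 (b : X) b.2 hab'
          linarith
        have hunion : μ (⋃ a : M, ball (a : X) (ε/2)) ≠ ∞ := by
          have hsub : (⋃ a : M, ball (a : X) (ε/2)) ⊆ ball x₀ (n+1+ε) := by
            rintro z ⟨U, ⟨a, rfl⟩, hz⟩
            simp only [mem_ball] at *
            have h1 : dist (a : X) x₀ < n+1 := hM.1.1 a.2
            calc dist z x₀ ≤ dist z a + dist (a:X) x₀ := dist_triangle _ _ _
              _ < ε/2 + (n+1) := add_lt_add hz h1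
              _ ≤ n+1+ε := by linarith
          exact ((measure_mono hsub).trans_lt (hμ x₀ (n+1+ε) (by positivity)).2).ne
        have := Measure.countable_meas_pos_of_disjoint_of_meas_iUnion_ne_top μ
          (fun a : M => measurableSet_ball) hdisj hunion
        have hall : {a : M | 0 < μ (ball (a : X) (ε/2))} = univ := by
          ext a; simp [(hμ a (ε/2) (by positivity)).1]
        rw [hall] at this
        have : Countable M := Set.countable_univ_iff.mp this
        exact Set.countable_coe_iff.mp this
      refine ⟨M, hMc, fun y hy => ?_⟩
      by_contra hcon
      push_neg at hcon
      have hyM : y ∉ M := fun hyM => by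
        have := hcon y hyM
        simp at this
        linarith
      have hins : insert y M ∈ S := by
        constructor
        · exact insert_subset hy hM.1.1
        · rintro a (rfl | haM) b (rfl | hbM) hab
          · exact absurd rfl hab
          · exact (hcon b hbM).le
          · rw [dist_comm]; exact (hcon a haM).le
          · exact hM.1.2 a haM b hbM hab
      have := hM.2 hins (subset_insert y M)
      exact hyM (this (mem_insert y M))
    choose D hDc hDd using key
    refine ⟨⋃ n, D n, countable_iUnion hDc, fun y => ?_⟩
    obtain ⟨n, hn⟩ := exists_nat_gt (dist y x₀)
    obtain ⟨w, hw, hwd⟩ := hDd n y (by rw [mem_ball]; push_cast; linarith)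
    exact ⟨w, mem_iUnion.2 ⟨n, hw⟩, hwd⟩

lemma jensen_aux {X : Type*} [MeasurableSpace X] (ν : Measure X) (h : X → ℝ≥0∞)
    (hm : AEMeasurable h ν) {p : ℝ} (hp : 1 ≤ p) (h0 : ν univ ≠ 0) (h1 : ν univ ≠ ∞) :
    ((ν univ)⁻¹ * ∫⁻ z, h z ∂ν) ^ p ≤ (ν univ)⁻¹ * ∫⁻ z, h z ^ p ∂ν := by
  rcases eq_or_lt_of_le hp with rfl | hp1
  · simp
  have hp0 : (0:ℝ) < p := lt_trans zero_lt_one hp1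
  set q := Real.conjExponent p with hqdef
  have hq : p.HolderConjugate q := Real.HolderConjugate.conjExponent hp1
  have hq0 : (0:ℝ) < q := hq.symm.pos
  have holder := ENNReal.lintegral_mul_le_Lp_mul_Lq ν hq hm
    (aemeasurable_const (b := (1:ℝ≥0∞)))
  simp only [Pi.mul_apply, mul_one, ENNReal.one_rpow, lintegral_one] at holder
  -- holder : ∫⁻ h ≤ (∫⁻ h^p)^(1/p) * (ν univ)^(1/q)
  set m := ν univ
  set I := ∫⁻ z, h z ∂ν
  set J := ∫⁻ z, h z ^ p ∂ν
  have hpq : p * (1/q) = p - 1 := by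
    rw [hqdef, Real.conjExponent]
    field_simp
  calc (m⁻¹ * I) ^ p = m⁻¹ ^ p * I ^ p := ENNReal.mul_rpow_of_nonneg _ _ hp0.le
    _ ≤ m⁻¹ ^ p * (J ^ (1/p) * m ^ (1/q)) ^ p := by
        gcongr
    _ = m⁻¹ ^ p * (J ^ ((1/p) * p) * m ^ ((1/q) * p)) := by
        rw [ENNReal.mul_rpow_of_nonneg _ _ hp0.le, ← ENNReal.rpow_mul, ← ENNReal.rpow_mul]
    _ = J * (m⁻¹ ^ p * m ^ (p - 1)) := by
        rw [one_div, inv_mul_cancel₀ hp0.ne', ENNReal.rpow_one, mul_comm (1/q) p, hpq]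
        ring
    _ = J * m⁻¹ := by
        congr 1
        rw [ENNReal.inv_rpow, ← ENNReal.rpow_neg, ← ENNReal.rpow_add _ _ h0 h1,
          ← ENNReal.rpow_neg_one m]
        congr 1
        ring
    _ = m⁻¹ * J := mul_comm _ _

lemma step1 {X : Type*} [MeasurableSpace X] (μ : Measure X)
    (f₀ : X → ℝ) (hf₀ : Measurable f₀) {p : ℝ} (hp : 1 ≤ p) {B : Set X}
    (hB0 : μ B ≠ 0) (hB1 : μ B ≠ ∞) :
    ENNReal.ofReal (|⨍ z in B, f₀ z ∂μ| ^ p) ≤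
      (μ B)⁻¹ * ∫⁻ z in B, ENNReal.ofReal (|f₀ z| ^ p) ∂μ := by
  have hp0 : (0:ℝ) < p := lt_of_lt_of_le zero_lt_one hp
  set m := μ B
  set I := ∫⁻ z in B, ENNReal.ofReal |f₀ z| ∂μ with hI
  have hmt : (0:ℝ) < m.toReal := ENNReal.toReal_pos hB0 hB1
  have habs : |⨍ z in B, f₀ z ∂μ| ≤ m.toReal⁻¹ * I.toReal := by
    rw [setAverage_eq, smul_eq_mul, abs_mul, measureReal_def, abs_of_nonneg (inv_nonneg.2 ENNReal.toReal_nonneg)]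
    have h1 : |∫ z in B, f₀ z ∂μ| ≤ ∫ z in B, |f₀ z| ∂μ := by
      simpa [Real.norm_eq_abs] using
        norm_integral_le_integral_norm (μ := μ.restrict B) f₀
    have h2 : ∫ z in B, |f₀ z| ∂μ = I.toReal := by
      rw [hI, integral_eq_lintegral_of_nonneg_ae (ae_of_all _ fun z => abs_nonneg _)
        (hf₀.abs.aestronglyMeasurable)]
    exact mul_le_mul_of_nonneg_left (h2 ▸ h1) (inv_nonneg.2 hmt.le)
  calc ENNReal.ofReal (|⨍ z in B, f₀ z ∂μ| ^ p)
      ≤ ENNReal.ofReal ((m.toReal⁻¹ * I.toReal) ^ p) := by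
        apply ENNReal.ofReal_le_ofReal
        exact Real.rpow_le_rpow (abs_nonneg _) habs hp0.le
    _ = ENNReal.ofReal (m.toReal⁻¹ * I.toReal) ^ p := by
        rw [ENNReal.ofReal_rpow_of_nonneg (by positivity) hp0.le]
    _ ≤ (m⁻¹ * I) ^ p := by
        gcongr
        rw [ENNReal.ofReal_mul (inv_nonneg.2 hmt.le)]
        gcongr
        · rw [ENNReal.ofReal_inv_of_pos hmt, ENNReal.ofReal_toReal hB1]
        · exact ENNReal.ofReal_toReal_le
    _ ≤ m⁻¹ * ∫⁻ z in B, (ENNReal.ofReal |f₀ z|) ^ p ∂μ := by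
        have := jensen_aux (μ.restrict B) (fun z => ENNReal.ofReal |f₀ z|)
          (hf₀.abs.ennreal_ofReal.aemeasurable) hp
          (by rwa [Measure.restrict_apply_univ]) (by rwa [Measure.restrict_apply_univ])
        rwa [Measure.restrict_apply_univ] at this
    _ = m⁻¹ * ∫⁻ z in B, ENNReal.ofReal (|f₀ z| ^ p) ∂μ := by
        congr 1
        apply lintegral_congr fun z => ?_
        rw [ENNReal.ofReal_rpow_of_nonneg (abs_nonneg _) hp0.le]

lemma key_bound {X : Type*} [MetricSpace X] [MeasurableSpace X] [BorelSpace X]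
    (μ : Measure X)
    (hμ : ∀ (x : X) (r : ℝ), 0 < r → 0 < μ (ball x r) ∧ μ (ball x r) < ∞)
    {p : ℝ} (hp : 1 ≤ p) (f₀ : X → ℝ) (hf₀ : Measurable f₀)
    {x : X} {t r₁ C : ℝ} (ht : 0 < t) (hC : 0 < C)
    (hcompa : ∀ᵐ z ∂μ.restrict (ball x t), ∀ r : ℝ, 0 < r → r < r₁ →
        ∀ᵐ y ∂μ.restrict (ball z r), μ (ball z r) ≤ ENNReal.ofReal C * μ (ball y r))
    {r : ℝ} (hr0 : 0 < r) (hrr₁ : r < r₁) (hrt : r < t/2) :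
    ∫⁻ y in ball x (t/2), ENNReal.ofReal (|⨍ z in ball y r, f₀ z ∂μ| ^ p) ∂μ ≤
      ENNReal.ofReal C * ∫⁻ z in ball x t, ENNReal.ofReal (|f₀ z| ^ p) ∂μ := by
  have hp0 : (0:ℝ) < p := lt_of_lt_of_le zero_lt_one hp
  haveI : SecondCountableTopology X := second_countable_of_mm μ hμ
  set g : X → ℝ≥0∞ := fun z => ENNReal.ofReal (|f₀ z| ^ p) with hgdef
  have hgm : Measurable g := by
    have : g = fun z => (ENNReal.ofReal |f₀ z|) ^ p := by
      funext z
      rw [hgdef, ENNReal.ofReal_rpow_of_nonneg (abs_nonneg _) hp0.le]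
    rw [this]
    exact ENNReal.continuous_rpow_const.measurable.comp hf₀.abs.ennreal_ofReal
  set ν := μ.restrict (ball x t) with hνdef
  haveI : IsFiniteMeasure ν :=
    ⟨by rw [hνdef, Measure.restrict_apply_univ]; exact (hμ x t ht).2⟩
  set V := ball x (t/2) with hVdef
  have hVsub : V ⊆ ball x t := ball_subset_ball (by linarith)
  have hνV : μ.restrict V = ν.restrict V := by
    rw [hνdef, Measure.restrict_restrict measurableSet_ball,
      inter_eq_self_of_subset_left hVsub]
  set φ : X → ℝ≥0∞ := fun y => μ (ball y r) with hφdef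
  have hφ : Measurable φ := measurable_ball_measure μ r
  have hφ0 : ∀ y, φ y ≠ 0 := fun y => (hμ y r hr0).1.ne'
  have hφt : ∀ y, φ y ≠ ∞ := fun y => (hμ y r hr0).2.ne
  have hsub : ∀ y ∈ V, ball y r ⊆ ball x t := by
    intro y hy z hz
    rw [mem_ball] at *
    calc dist z x ≤ dist z y + dist y x := dist_triangle _ _ _
      _ < r + t/2 := by exact add_lt_add hz hy
      _ ≤ t := by linarith
  set F : X → X → ℝ≥0∞ := fun y z => (φ y)⁻¹ * (ball y r).indicator g z with hFdef
  have hFm : AEMeasurable (Function.uncurry F) ((ν.restrict V).prod ν) := by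
    have heq : Function.uncurry F = fun q : X × X =>
        if dist q.2 q.1 < r then (φ q.1)⁻¹ * g q.2 else 0 := by
      funext q
      show (φ q.1)⁻¹ * (ball q.1 r).indicator g q.2 = _
      by_cases h : dist q.2 q.1 < r
      · rw [if_pos h, indicator_of_mem (mem_ball.mpr h)]
      · rw [if_neg h, indicator_of_notMem (fun hm => h (mem_ball.mp hm)), mul_zero]
    rw [heq]
    have hset : MeasurableSet {q : X × X | dist q.2 q.1 < r} :=
      (isOpen_lt (continuous_snd.dist continuous_fst) continuous_const).measurableSet
    exact (Measurable.ite hset (((hφ.comp measurable_fst).inv).mul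
      (hgm.comp measurable_snd)) measurable_const).aemeasurable
  calc ∫⁻ y in V, ENNReal.ofReal (|⨍ z in ball y r, f₀ z ∂μ| ^ p) ∂μ
      ≤ ∫⁻ y in V, (φ y)⁻¹ * ∫⁻ z in ball y r, g z ∂μ ∂μ :=
        lintegral_mono fun y => step1 μ f₀ hf₀ hp (hφ0 y) (hφt y)
    _ = ∫⁻ y, ∫⁻ z, F y z ∂ν ∂(ν.restrict V) := by
        rw [← hνV]
        apply setLIntegral_congr_fun measurableSet_ball
        intro y hy
        beta_reduce
        rw [lintegral_const_mul' _ _ (ENNReal.inv_ne_top.2 (hφ0 y)),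
          lintegral_indicator measurableSet_ball,
          hνdef, Measure.restrict_restrict measurableSet_ball,
          inter_eq_self_of_subset_left (hsub y hy)]
    _ = ∫⁻ z, ∫⁻ y, F y z ∂(ν.restrict V) ∂ν := lintegral_lintegral_swap hFm
    _ ≤ ∫⁻ z, ENNReal.ofReal C * g z ∂ν := by
        apply lintegral_mono_ae
        filter_upwards [hcompa] with z hz
        have hz' := hz r hr0 hrr₁
        set b := μ (ball z r) with hbdef
        have hb0 : b ≠ 0 := (hμ z r hr0).1.ne'
        have hbt : b ≠ ∞ := (hμ z r hr0).2.ne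
        have hind : (fun y => F y z) =
            fun y => (ball z r).indicator (fun y' => (φ y')⁻¹ * g z) y := by
          funext y
          show (φ y)⁻¹ * (ball y r).indicator g z = _
          by_cases h : dist y z < r
          · rw [indicator_of_mem (mem_ball.mpr h),
              indicator_of_mem (mem_ball.mpr (by rwa [dist_comm] : dist z y < r))]
          · rw [indicator_of_notMem (fun hm => h (mem_ball.mp hm)),
              indicator_of_notMem
                (fun hm => h (by rw [dist_comm]; exact mem_ball.mp hm)), mul_zero]
        rw [hind, lintegral_indicator measurableSet_ball]
        set ρ := (ν.restrict V).restrict (ball z r) with hρdef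
        have hρ : ρ ≤ μ.restrict (ball z r) := by
          rw [hρdef, ← hνV, Measure.restrict_restrict measurableSet_ball]
          exact Measure.restrict_mono inter_subset_left le_rfl
        have hz'' : ∀ᵐ y ∂ρ, b ≤ ENNReal.ofReal C * φ y := hz'.filter_mono (ae_mono hρ)
        have hCne : ENNReal.ofReal C ≠ 0 := by
          simp [ENNReal.ofReal_eq_zero, not_le, hC]
        calc ∫⁻ y in ball z r, (φ y)⁻¹ * g z ∂(ν.restrict V)
            ≤ ∫⁻ _, (ENNReal.ofReal C * b⁻¹) * g z ∂ρ := by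
              apply lintegral_mono_ae
              filter_upwards [hz''] with y hy
              gcongr
              calc (φ y)⁻¹ = ENNReal.ofReal C * (ENNReal.ofReal C * φ y)⁻¹ := by
                    rw [ENNReal.mul_inv (Or.inl hCne) (Or.inl ENNReal.ofReal_ne_top),
                      ← mul_assoc, ENNReal.mul_inv_cancel hCne ENNReal.ofReal_ne_top,
                      one_mul]
                _ ≤ ENNReal.ofReal C * b⁻¹ :=
                    mul_le_mul_right (ENNReal.inv_le_inv.2 hy) _
          _ = (ENNReal.ofReal C * b⁻¹ * g z) * ρ univ := lintegral_const _
          _ ≤ (ENNReal.ofReal C * b⁻¹ * g z) * b := by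
              gcongr
              calc ρ univ ≤ (μ.restrict (ball z r)) univ := Measure.le_iff'.1 hρ univ
                _ = b := by rw [Measure.restrict_apply_univ]
          _ = ENNReal.ofReal C * g z := by
              rw [mul_assoc, mul_assoc, mul_comm (g z) b, ← mul_assoc b⁻¹,
                ENNReal.inv_mul_cancel hb0 hbt, one_mul]
    _ = ENNReal.ofReal C * ∫⁻ z in ball x t, g z ∂μ :=
        lintegral_const_mul' _ _ ENNReal.ofReal_ne_top

theorem stmt_1 {X : Type*} [MetricSpace X] [MeasurableSpace X] [BorelSpace X]
    (μ : Measure X)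
    (hμ : ∀ (x : X) (r : ℝ), 0 < r → 0 < μ (ball x r) ∧ μ (ball x r) < ∞)
    (p : ℝ) (hp : 1 ≤ p)
    (hcomp : ∀ x₀ : X, ∃ V ∈ 𝓝 x₀, ∃ r₀ C : ℝ, 0 < r₀ ∧ 0 < C ∧
      ∀ᵐ x ∂μ.restrict V, ∀ r : ℝ, 0 < r → r < r₀ →
        ∀ᵐ y ∂μ.restrict (ball x r), μ (ball x r) ≤ ENNReal.ofReal C * μ (ball y r))
    (f : X → ℝ) (hfm : AEMeasurable f μ)
    (hfloc : ∀ x : X, ∃ V ∈ 𝓝 x, ∫⁻ y in V, ENNReal.ofReal (|f y| ^ p) ∂μ < ∞)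
    (x : X) :
    ∃ r₀ C : ℝ, 0 < r₀ ∧ 0 < C ∧ ∃ V ∈ 𝓝 x, ∀ r : ℝ, 0 < r → r < r₀ →
      ∫⁻ y in V, ENNReal.ofReal (|⨍ z in ball y r, f z ∂μ| ^ p) ∂μ ≤
          ENNReal.ofReal C * ∫⁻ y in V, ENNReal.ofReal (|f y| ^ p) ∂μ ∧
        ∫⁻ y in V, ENNReal.ofReal (|f y| ^ p) ∂μ < ∞ := by
  have hp0 : (0:ℝ) < p := lt_of_lt_of_le zero_lt_one hp
  obtain ⟨f₀, hf₀m, hff₀⟩ := hfm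
  obtain ⟨Vc, hVc, r₁, C, hr₁, hC, hcompa⟩ := hcomp x
  obtain ⟨W, hW, hWfin⟩ := hfloc x
  obtain ⟨t, ht, htsub⟩ := Metric.mem_nhds_iff.1 (inter_mem hVc hW)
  have htVc : ball x t ⊆ Vc := htsub.trans inter_subset_left
  have htW : ball x t ⊆ W := htsub.trans inter_subset_right
  have hcompa' : ∀ᵐ z ∂μ.restrict (ball x t), ∀ r : ℝ, 0 < r → r < r₁ →
      ∀ᵐ y ∂μ.restrict (ball z r), μ (ball z r) ≤ ENNReal.ofReal C * μ (ball y r) :=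
    hcompa.filter_mono (ae_mono (Measure.restrict_mono htVc le_rfl))
  have havg : ∀ (y : X) (r : ℝ), (⨍ z in ball y r, f z ∂μ) = ⨍ z in ball y r, f₀ z ∂μ :=
    fun y r => average_congr (ae_restrict_of_ae hff₀)
  have hgcong : ∀ s : Set X, ∫⁻ z in s, ENNReal.ofReal (|f z| ^ p) ∂μ
      = ∫⁻ z in s, ENNReal.ofReal (|f₀ z| ^ p) ∂μ :=
    fun s => lintegral_congr_ae ((ae_restrict_of_ae hff₀).mono fun z hz => by simp only [hz])
  have hMfin : ∫⁻ z in ball x t, ENNReal.ofReal (|f z| ^ p) ∂μ < ∞ :=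
    (lintegral_mono_set htW).trans_lt hWfin
  by_cases hm : ∫⁻ z in ball x (t/2), ENNReal.ofReal (|f z| ^ p) ∂μ = 0
  · -- degenerate case : f vanishes a.e. near x
    refine ⟨t/4, 1, by positivity, one_pos, ball x (t/4),
      ball_mem_nhds x (by positivity), ?_⟩
    intro r hr0 hrt
    have hg₀m : Measurable fun z => ENNReal.ofReal (|f₀ z| ^ p) := by
      have heq2 : (fun z => ENNReal.ofReal (|f₀ z| ^ p))
          = fun z => (ENNReal.ofReal |f₀ z|) ^ p := by
        funext z
        rw [ENNReal.ofReal_rpow_of_nonneg (abs_nonneg _) hp0.le]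
      rw [heq2]
      exact ENNReal.continuous_rpow_const.measurable.comp hf₀m.abs.ennreal_ofReal
    have hm₀ : ∫⁻ z in ball x (t/2), ENNReal.ofReal (|f₀ z| ^ p) ∂μ = 0 := by
      rw [← hgcong]; exact hm
    have hzero : f₀ =ᵐ[μ.restrict (ball x (t/2))] 0 := by
      have h1 := (lintegral_eq_zero_iff hg₀m).1 hm₀
      filter_upwards [h1] with z hz
      have h2 : |f₀ z| ^ p = 0 := le_antisymm (ENNReal.ofReal_eq_zero.1 hz)
        (Real.rpow_nonneg (abs_nonneg _) p)
      by_contra hne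
      have habs : (0:ℝ) < |f₀ z| := abs_pos.2 hne
      exact (Real.rpow_pos_of_pos habs p).ne' h2
    constructor
    · have hLHS : ∫⁻ y in ball x (t/4),
          ENNReal.ofReal (|⨍ z in ball y r, f z ∂μ| ^ p) ∂μ = 0 := by
        have hcongr := setLIntegral_congr_fun (μ := μ) (f := fun y =>
            ENNReal.ofReal (|⨍ z in ball y r, f z ∂μ| ^ p)) (g := fun _ => 0)
          (measurableSet_ball (x := x) (ε := t/4)) ?_
        · rw [hcongr, lintegral_zero]
        · intro y hy
          have hsub2 : ball y r ⊆ ball x (t/2) := by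
            intro z hz
            rw [mem_ball] at *
            calc dist z x ≤ dist z y + dist y x := dist_triangle _ _ _
              _ < r + t/4 := add_lt_add hz hy
              _ ≤ t/2 := by linarith
          have hz2 : f₀ =ᵐ[μ.restrict (ball y r)] 0 :=
            hzero.filter_mono (ae_mono (Measure.restrict_mono hsub2 le_rfl))
          have havg0 : (⨍ z in ball y r, f z ∂μ) = 0 := by
            rw [havg y r, average_congr hz2]
            simp [average_eq]
          simp only [havg0, abs_zero, Real.zero_rpow hp0.ne', ENNReal.ofReal_zero]
      rw [hLHS]
      exact zero_le
    · exact (lintegral_mono_set (ball_subset_ball (by linarith))).trans_lt hMfin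
  · -- main case
    set m := ∫⁻ z in ball x (t/2), ENNReal.ofReal (|f z| ^ p) ∂μ with hmdef
    set M := ∫⁻ z in ball x t, ENNReal.ofReal (|f z| ^ p) ∂μ with hMdef
    set K := ENNReal.ofReal C * M with hKdef
    have hmM : m ≤ M := lintegral_mono_set (ball_subset_ball (by linarith))
    have hmtop : m ≠ ∞ := (hmM.trans_lt hMfin).ne
    have hKtop : K ≠ ∞ := ENNReal.mul_ne_top ENNReal.ofReal_ne_top hMfin.ne
    set C₂ := (K / m).toReal + 1 with hC₂def
    have hC₂pos : 0 < C₂ := by positivity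
    have hKle : K ≤ ENNReal.ofReal C₂ * m := by
      have hdiv : K / m ≠ ∞ :=
        (ENNReal.div_lt_top hKtop hm).ne
      calc K = K / m * m := (ENNReal.div_mul_cancel hm hmtop).symm
        _ ≤ ENNReal.ofReal C₂ * m := by
            gcongr
            calc K / m = ENNReal.ofReal (K / m).toReal := (ENNReal.ofReal_toReal hdiv).symm
              _ ≤ ENNReal.ofReal C₂ := ENNReal.ofReal_le_ofReal (by
                  rw [hC₂def]; linarith)
    refine ⟨min r₁ (t/2), C₂, lt_min hr₁ (by positivity), hC₂pos, ball x (t/2),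
      ball_mem_nhds x (by positivity), ?_⟩
    intro r hr0 hrlt
    rw [lt_min_iff] at hrlt
    constructor
    · calc ∫⁻ y in ball x (t/2), ENNReal.ofReal (|⨍ z in ball y r, f z ∂μ| ^ p) ∂μ
          = ∫⁻ y in ball x (t/2),
              ENNReal.ofReal (|⨍ z in ball y r, f₀ z ∂μ| ^ p) ∂μ := by
            apply lintegral_congr fun y => ?_
            rw [havg y r]
        _ ≤ ENNReal.ofReal C * ∫⁻ z in ball x t, ENNReal.ofReal (|f₀ z| ^ p) ∂μ :=
            key_bound μ hμ hp f₀ hf₀m ht hC hcompa' hr0 hrlt.1 hrlt.2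
        _ = K := by rw [hKdef, hMdef, hgcong]
        _ ≤ ENNReal.ofReal C₂ * m := hKle
    · exact hmM.trans_lt hMfin
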